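/- The polynomial ring ℂ[x_1,…,x_n] is a free module of rank n! over its subring of symmetric polynomials. -/

import Mathlib

open MvPolynomial Finset

set_option maxHeartbeats 1000000
set_option synthInstance.maxHeartbeats 400000

noncomputable section
namespace CoinvAux

lemma mesymm_cons {R : Type*} [CommSemiring R] (a : R) (s : Multiset R) (k : ℕ) :
    (a ::ₘ s).esymm (k+1) = s.esymm (k+1) + a * s.esymm k := by
  rw [Multiset.esymm, Multiset.powersetCard_cons, Multiset.map_add, Multiset.sum_add,
    Multiset.map_map, Multiset.esymm]
  congr 1
  rw [Multiset.esymm, ← Multiset.sum_map_mul_left]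
  congr 1
  refine Multiset.map_congr rfl fun t _ => ?_
  simp [Multiset.prod_cons]

lemma mesymm_hom {R S F : Type*} [CommSemiring R] [CommSemiring S] [FunLike F R S]
    [RingHomClass F R S] (f : F)
    (s : Multiset R) (k : ℕ) : f (s.esymm k) = (s.map f).esymm k := by
  rw [Multiset.esymm, Multiset.esymm, Multiset.powersetCard_map, Multiset.map_map,
    map_multiset_sum, Multiset.map_map]
  refine congr_arg _ (Multiset.map_congr rfl fun t _ => ?_)
  exact map_multiset_prod f t

variable {R : Type*} [CommRing R] {n : ℕ}

def e' (n : ℕ) (R : Type*) [CommRing R] (k : ℕ) : MvPolynomial (Fin (n+1)) R :=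
  rename Fin.succ (esymm (Fin n) R k)

lemma e'_zero : e' n R 0 = 1 := by simp [e', esymm_zero]

lemma e'_multiset (k : ℕ) :
    e' n R k = ((univ.val.map fun i : Fin n => X (Fin.succ i)).esymm k) := by
  rw [e', esymm_eq_multiset_esymm, mesymm_hom (rename (R := R) (Fin.succ : Fin n → Fin (n+1))), Multiset.map_map]
  refine congr_arg (fun s => Multiset.esymm s k) (Multiset.map_congr rfl fun i _ => ?_)
  simp

lemma univ_val_map_X :
    ((univ : Finset (Fin (n+1))).val.map (X (R := R))) =
      X 0 ::ₘ (univ.val.map fun i : Fin n => X (Fin.succ i)) := by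
  rw [Fin.univ_succ, Finset.cons_val, Multiset.map_cons, Finset.map_val, Multiset.map_map]
  rfl

lemma esymm_rec (k : ℕ) :
    esymm (Fin (n+1)) R (k+1) = e' n R (k+1) + X 0 * e' n R k := by
  rw [esymm_eq_multiset_esymm, univ_val_map_X, mesymm_cons, e'_multiset, e'_multiset]



/-- distinguished iso -/
def psi (n : ℕ) (R : Type*) [CommRing R] :
    MvPolynomial (Fin (n+1)) R ≃ₐ[R] MvPolynomial (Fin n) (Polynomial R) :=
  (renameEquiv R (_root_.finSuccEquiv n)).trans (optionEquivRight R (Fin n))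

lemma psi_X0 : psi n R (X 0) = C Polynomial.X := by
  simp [psi, optionEquivRight_X_none]

lemma psi_Xsucc (i : Fin n) : psi n R (X i.succ) = X i := by
  simp [psi, optionEquivRight_X_some]

lemma psi_C (r : R) : psi n R (C r) = C (Polynomial.C r) := by
  simp [psi, optionEquivRight_C]

lemma psi_rename_succ (q : MvPolynomial (Fin n) R) :
    psi n R (rename Fin.succ q) = map Polynomial.C q := by
  induction q using MvPolynomial.induction_on with
  | C r => simp [psi_C]
  | add p q hp hq => simp [map_add, hp, hq]
  | mul_X p i hp => simp [map_mul, hp, psi_Xsucc]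



def MM (n : ℕ) (R : Type*) [CommRing R] : Submodule (symmetricSubalgebra (Fin (n+1)) R) (MvPolynomial (Fin (n+1)) R) :=
  Submodule.span _ (Set.range fun j : Fin (n+1) => (X 0 : MvPolynomial (Fin (n+1)) R)^(j:ℕ))


lemma smul_eq (a : symmetricSubalgebra (Fin (n+1)) R) (p : MvPolynomial (Fin (n+1)) R) :
    a • p = (a : MvPolynomial (Fin (n+1)) R) * p := by
  rw [Subalgebra.smul_def, smul_eq_mul]

lemma pow_mem_MM {k : ℕ} (hk : k ≤ n) : (X 0 : MvPolynomial (Fin (n+1)) R)^k ∈ MM n R :=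
  Submodule.subset_span ⟨⟨k, Nat.lt_succ_of_le hk⟩, rfl⟩

lemma xpow_succ_mem : (X 0 : MvPolynomial (Fin (n+1)) R)^(n+1) ∈ MM n R := by
  classical
  set s : Multiset (MvPolynomial (Fin (n+1)) R) := univ.val.map X with hs
  have hcard : Multiset.card s = n + 1 := by simp [hs]
  have h := congrArg (Polynomial.eval (X 0 : MvPolynomial (Fin (n+1)) R))
    (Multiset.prod_X_sub_X_eq_sum_esymm s)
  rw [Polynomial.eval_multiset_prod, Multiset.map_map] at h
  have h0 : (0 : MvPolynomial (Fin (n+1)) R) ∈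
      s.map fun t => Polynomial.eval (X 0) (Polynomial.X - Polynomial.C t) := by
    refine Multiset.mem_map.2 ⟨X 0, ?_, by simp⟩
    simp [hs]
  rw [show (Multiset.map ((Polynomial.eval (X 0)) ∘ fun t => Polynomial.X - Polynomial.C t) s)
      = s.map fun t => Polynomial.eval (X 0) (Polynomial.X - Polynomial.C t) from rfl,
    Multiset.prod_eq_zero h0] at h
  rw [Polynomial.eval_finset_sum] at h
  simp only [hcard, Polynomial.eval_mul, Polynomial.eval_pow, Polynomial.eval_C,
    Polynomial.eval_X, Polynomial.eval_intCast, Polynomial.eval_one, Polynomial.eval_neg,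
    Polynomial.eval_one] at h
  rw [Finset.sum_range_succ'] at h
  have hesymm : ∀ j, s.esymm j = esymm (Fin (n+1)) R j := fun j => by
    rw [esymm_eq_multiset_esymm]
  simp only [hesymm, MvPolynomial.esymm_zero, pow_zero, one_mul, Nat.sub_zero,
    Nat.succ_sub_succ] at h
  have hx : (X 0 : MvPolynomial (Fin (n+1)) R) ^ (n+1)
      = -∑ k ∈ range (n+1), (-1)^(k+1) * (esymm (Fin (n+1)) R (k+1) * X 0 ^ (n - k)) := by
    linear_combination -h
  rw [hx]
  refine Submodule.neg_mem _ (Submodule.sum_mem _ fun k hk => ?_)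
  set eA : symmetricSubalgebra (Fin (n+1)) R :=
    ⟨esymm (Fin (n+1)) R (k+1), esymm_isSymmetric _ _ _⟩ with heA
  have hval : (((-1)^(k+1) * eA : symmetricSubalgebra (Fin (n+1)) R) :
      MvPolynomial (Fin (n+1)) R) = (-1)^(k+1) * esymm (Fin (n+1)) R (k+1) := by
    push_cast [heA]; ring
  have : (-1)^(k+1) * (esymm (Fin (n+1)) R (k+1) * X 0 ^ (n - k))
      = ((-1)^(k+1) * eA) • (X 0 ^ (n - k) : MvPolynomial (Fin (n+1)) R) := by
    rw [smul_eq, hval]; ring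
  rw [this]
  exact Submodule.smul_mem _ _ (pow_mem_MM (Nat.sub_le n k))





lemma mul_X0_mem {p : MvPolynomial (Fin (n+1)) R} (hp : p ∈ MM n R) :
    X 0 * p ∈ MM n R := by
  refine Submodule.span_induction ?_ ?_ ?_ ?_ hp
  · rintro x ⟨j, rfl⟩
    rw [← pow_succ']
    rcases eq_or_lt_of_le (Nat.lt_succ_iff.1 j.2) with h | h
    · rw [h]; exact xpow_succ_mem
    · exact pow_mem_MM (by omega)
  · simp [Submodule.zero_mem]
  · intro x y _ _ hx hy
    rw [mul_add]; exact Submodule.add_mem _ hx hy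
  · intro a x _ hx
    rw [smul_eq, show (X 0 : MvPolynomial (Fin (n+1)) R) * ((a : MvPolynomial (Fin (n+1)) R) * x)
      = (a : MvPolynomial (Fin (n+1)) R) * (X 0 * x) by ring, ← smul_eq]
    exact Submodule.smul_mem _ _ hx

lemma xpow_mul_mem {p : MvPolynomial (Fin (n+1)) R} (hp : p ∈ MM n R) (k : ℕ) :
    (X 0)^k * p ∈ MM n R := by
  induction k with
  | zero => simpa using hp
  | succ m ih =>
      rw [pow_succ, show (X 0 : MvPolynomial (Fin (n+1)) R)^m * X 0 * p
        = X 0 * ((X 0)^m * p) by ring]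
      exact mul_X0_mem ih

lemma one_mem_MM : (1 : MvPolynomial (Fin (n+1)) R) ∈ MM n R := by
  simpa using pow_mem_MM (n := n) (R := R) (Nat.zero_le n)

lemma coe_mem_MM (a : symmetricSubalgebra (Fin (n+1)) R) :
    (a : MvPolynomial (Fin (n+1)) R) ∈ MM n R := by
  simpa [smul_eq] using Submodule.smul_mem _ a (one_mem_MM (n := n) (R := R))

lemma mul_mem_MM {p q : MvPolynomial (Fin (n+1)) R} (hp : p ∈ MM n R) (hq : q ∈ MM n R) :
    p * q ∈ MM n R := by
  refine Submodule.span_induction ?_ ?_ ?_ ?_ hp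
  · rintro x ⟨j, rfl⟩; exact xpow_mul_mem hq _
  · simp [Submodule.zero_mem]
  · intro x y _ _ hx hy; rw [add_mul]; exact Submodule.add_mem _ hx hy
  · intro a x _ hx
    rw [smul_eq, mul_assoc, ← smul_eq]
    exact Submodule.smul_mem _ _ hx

lemma e'_mem (k : ℕ) : e' n R k ∈ MM n R := by
  induction k with
  | zero => rw [e'_zero]; exact one_mem_MM
  | succ m ih =>
      have h := esymm_rec (n := n) (R := R) m
      have : e' n R (m+1) = esymm (Fin (n+1)) R (m+1) - X 0 * e' n R m := by
        rw [h]; ring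
      rw [this]
      refine Submodule.sub_mem _ ?_ (mul_X0_mem ih)
      exact coe_mem_MM ⟨esymm (Fin (n+1)) R (m+1), esymm_isSymmetric _ _ _⟩

lemma xpow_mem (k : ℕ) : (X 0 : MvPolynomial (Fin (n+1)) R)^k ∈ MM n R := by
  simpa using xpow_mul_mem (one_mem_MM (n := n) (R := R)) k

lemma psi_e' (k : ℕ) : psi n R (e' n R k) = esymm (Fin n) (Polynomial R) k := by
  rw [e', psi_rename_succ, map_esymm]

def BB (n : ℕ) (R : Type*) [CommRing R] : Subalgebra R (MvPolynomial (Fin (n+1)) R) :=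
  Subalgebra.comap (psi n R).toAlgHom
    ((symmetricSubalgebra (Fin n) (Polynomial R)).restrictScalars R)

lemma mem_BB {p : MvPolynomial (Fin (n+1)) R} :
    p ∈ BB n R ↔ (psi n R p).IsSymmetric := Iff.rfl

lemma X0_mem_BB : (X 0 : MvPolynomial (Fin (n+1)) R) ∈ BB n R := by
  rw [mem_BB, psi_X0]
  exact MvPolynomial.IsSymmetric.C _

lemma e'_mem_BB (k : ℕ) : e' n R k ∈ BB n R := by
  rw [mem_BB, psi_e']
  exact esymm_isSymmetric _ _ _

lemma psi_rename_perm (e : Equiv.Perm (Fin n)) (p : MvPolynomial (Fin (n+1)) R) :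
    psi n R (rename (⇑((_root_.finSuccEquiv n).trans
        ((e.optionCongr).trans (_root_.finSuccEquiv n).symm))) p)
      = rename e (psi n R p) := by
  induction p using MvPolynomial.induction_on with
  | C r => simp [psi_C, rename_C]
  | add p q hp hq => simp only [map_add, hp, hq]
  | mul_X p i hp =>
      simp only [map_mul, hp]
      congr 1
      rw [rename_X]
      refine Fin.cases ?_ (fun j => ?_) i
      · have h0 : ((_root_.finSuccEquiv n).trans
            ((e.optionCongr).trans (_root_.finSuccEquiv n).symm)) 0 = 0 := by simp
        rw [h0, psi_X0, rename_C]
      · have hsucc : ((_root_.finSuccEquiv n).trans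
            ((e.optionCongr).trans (_root_.finSuccEquiv n).symm)) j.succ = (e j).succ := by
          simp
        rw [hsucc, psi_Xsucc, psi_Xsucc, rename_X]

lemma A_le_BB : symmetricSubalgebra (Fin (n+1)) R ≤ BB n R := by
  intro p hp
  rw [mem_symmetricSubalgebra] at hp
  rw [mem_BB]
  intro e
  rw [← psi_rename_perm, hp]

lemma psi_symm_C_mem (c : Polynomial R) : (psi n R).symm (C c) ∈ MM n R := by
  induction c using Polynomial.induction_on' with
  | add p q hp hq => rw [map_add, map_add]; exact Submodule.add_mem _ hp hq
  | monomial k r =>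
      have : (C (Polynomial.monomial k r) : MvPolynomial (Fin n) (Polynomial R))
          = C (Polynomial.C r) * (C Polynomial.X)^k := by
        rw [← map_pow, ← map_mul]
        congr 1
        rw [Polynomial.C_mul_X_pow_eq_monomial]
      rw [this, map_mul, map_pow, ← psi_C, ← psi_X0, AlgEquiv.symm_apply_apply,
        AlgEquiv.symm_apply_apply]
      exact mul_mem_MM (coe_mem_MM ⟨C r, MvPolynomial.IsSymmetric.C r⟩) (xpow_mem k)

lemma psi_symm_aeval_mem (q : MvPolynomial (Fin n) (Polynomial R)) :
    (psi n R).symm (aeval (fun i : Fin n => esymm (Fin n) (Polynomial R) ((i : ℕ)+1)) q)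
      ∈ MM n R := by
  induction q using MvPolynomial.induction_on with
  | C c => rw [aeval_C]; exact psi_symm_C_mem c
  | add p q hp hq => rw [map_add, map_add]; exact Submodule.add_mem _ hp hq
  | mul_X p i hp =>
      rw [map_mul, map_mul, aeval_X, ← psi_e' ((i : ℕ)+1), AlgEquiv.symm_apply_apply]
      exact mul_mem_MM hp (e'_mem _)

lemma BB_le_MM {p : MvPolynomial (Fin (n+1)) R} (hp : p ∈ BB n R) : p ∈ MM n R := by
  rw [mem_BB] at hp
  obtain ⟨q, hq⟩ := (esymmAlgHom_fin_bijective (Polynomial R) n).2 ⟨psi n R p, hp⟩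
  have hq' : aeval (fun i : Fin n => esymm (Fin n) (Polynomial R) ((i : ℕ)+1)) q = psi n R p := by
    have := congrArg Subtype.val hq
    rw [esymmAlgHom_apply] at this
    exact this
  have := psi_symm_aeval_mem (n := n) (R := R) q
  rw [hq', AlgEquiv.symm_apply_apply] at this
  exact this

lemma xpow_linearIndependent [IsDomain R] :
    LinearIndependent (symmetricSubalgebra (Fin (n+1)) R)
      (fun j : Fin (n+1) => (X 0 : MvPolynomial (Fin (n+1)) R)^(j:ℕ)) := by
  rw [Fintype.linearIndependent_iff]
  intro g hg j
  set F : Polynomial (MvPolynomial (Fin (n+1)) R) :=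
    ∑ j : Fin (n+1), Polynomial.C ((g j : MvPolynomial (Fin (n+1)) R)) * Polynomial.X ^ (j:ℕ)
    with hF
  have heval : ∀ i : Fin (n+1), F.eval (X i) = 0 := by
    intro i
    have h0 : ∑ j : Fin (n+1), (g j : MvPolynomial (Fin (n+1)) R) * (X 0)^(j:ℕ) = 0 := by
      simpa [smul_eq] using hg
    have h1 := congrArg (rename (Equiv.swap (0 : Fin (n+1)) i)) h0
    rw [map_sum, map_zero] at h1
    have h2 : ∀ j : Fin (n+1),
        rename (⇑(Equiv.swap (0 : Fin (n+1)) i)) ((g j : MvPolynomial (Fin (n+1)) R) * (X 0)^(j:ℕ))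
          = (g j : MvPolynomial (Fin (n+1)) R) * (X i)^(j:ℕ) := by
      intro j
      rw [map_mul, map_pow, rename_X, Equiv.swap_apply_left, (g j).2 (Equiv.swap 0 i)]
    rw [Finset.sum_congr rfl fun j _ => h2 j] at h1
    rw [hF, Polynomial.eval_finset_sum]
    simpa using h1
  have hdeg : F.natDegree ≤ n := by
    refine Polynomial.natDegree_sum_le_of_forall_le _ _ fun i _ => ?_
    exact (Polynomial.natDegree_C_mul_X_pow_le _ _).trans (Nat.lt_succ_iff.1 i.2)
  have hF0 : F = 0 := by
    refine Polynomial.eq_zero_of_natDegree_lt_card_of_eval_eq_zero F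
      (MvPolynomial.X_injective) heval ?_
    rw [Fintype.card_fin]
    omega
  have hcoeff : F.coeff (j : ℕ) = (g j : MvPolynomial (Fin (n+1)) R) := by
    rw [hF, Polynomial.finset_sum_coeff]
    rw [Finset.sum_eq_single j]
    · simp
    · intro k _ hk
      rw [Polynomial.coeff_C_mul, Polynomial.coeff_X_pow, if_neg (by
        simpa [Fin.val_eq_val, eq_comm] using hk), mul_zero]
    · simp
  rw [hF0, Polynomial.coeff_zero] at hcoeff
  exact Subtype.ext hcoeff.symm

def basisPoverBB {ι : Type*}
    (c : Module.Basis ι (symmetricSubalgebra (Fin n) (Polynomial R))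
      (MvPolynomial (Fin n) (Polynomial R))) :
    Module.Basis ι (BB n R) (MvPolynomial (Fin (n+1)) R) := by
  refine Module.Basis.mk (v := fun i => (psi n R).symm (c i)) ?_ ?_
  · rw [linearIndependent_iff']
    intro s g hsum i hi
    set gS : ι → (symmetricSubalgebra (Fin n) (Polynomial R)) :=
      fun i => ⟨psi n R (g i : MvPolynomial (Fin (n+1)) R), (g i).2⟩ with hgS
    have h1 : ∑ i ∈ s, gS i • c i = 0 := by
      have := congrArg (psi n R) hsum
      rw [map_sum, map_zero] at this
      rw [← this]
      refine Finset.sum_congr rfl fun i _ => ?_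
      rw [Subalgebra.smul_def, smul_eq_mul, Subalgebra.smul_def, smul_eq_mul, map_mul,
        AlgEquiv.apply_symm_apply]
    have := linearIndependent_iff'.1 c.linearIndependent s gS h1 i hi
    have hval : psi n R (g i : MvPolynomial (Fin (n+1)) R) = 0 := congrArg Subtype.val this
    exact Subtype.ext ((map_eq_zero_iff _ (AlgEquiv.injective _)).1 hval)
  · rintro p -
    have hmem : psi n R p ∈ Submodule.span (symmetricSubalgebra (Fin n) (Polynomial R))
        (Set.range c) := by
      rw [c.span_eq]; trivial
    have : ∀ q, q ∈ Submodule.span (symmetricSubalgebra (Fin n) (Polynomial R)) (Set.range c) →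
        (psi n R).symm q ∈ Submodule.span (BB n R)
          (Set.range fun i => (psi n R).symm (c i)) := by
      intro q hq
      refine Submodule.span_induction ?_ ?_ ?_ ?_ hq
      · rintro x ⟨i, rfl⟩
        exact Submodule.subset_span ⟨i, rfl⟩
      · rw [map_zero]; exact Submodule.zero_mem _
      · intro a b _ _ ha hb; rw [map_add]; exact Submodule.add_mem _ ha hb
      · intro a q _ hq'
        rw [Subalgebra.smul_def, smul_eq_mul, map_mul]
        set b : BB n R := ⟨(psi n R).symm (a : MvPolynomial (Fin n) (Polynomial R)), by
          rw [mem_BB, AlgEquiv.apply_symm_apply]; exact a.2⟩ with hb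
        have : (psi n R).symm (a : MvPolynomial (Fin n) (Polynomial R)) * (psi n R).symm q
            = b • ((psi n R).symm q) := by
          rw [Subalgebra.smul_def, smul_eq_mul]
        rw [this]
        exact Submodule.smul_mem _ _ hq'
    have := this _ hmem
    rwa [AlgEquiv.symm_apply_apply] at this

def basisBBoverA [IsDomain R]
    [Module (symmetricSubalgebra (Fin (n+1)) R) (BB n R)]
    (hsmul : ∀ (a : symmetricSubalgebra (Fin (n+1)) R) (b : BB n R),
      ((a • b : BB n R) : MvPolynomial (Fin (n+1)) R)
        = (a : MvPolynomial (Fin (n+1)) R) * (b : MvPolynomial (Fin (n+1)) R)) :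
    Module.Basis (Fin (n+1)) (symmetricSubalgebra (Fin (n+1)) R) (BB n R) := by
  have hcomp : ∀ (a : symmetricSubalgebra (Fin (n+1)) R) (b : BB n R),
      ((a • b : BB n R) : MvPolynomial (Fin (n+1)) R)
        = a • (b : MvPolynomial (Fin (n+1)) R) := by
    intro a b
    rw [hsmul, Subalgebra.smul_def, smul_eq_mul]
  set valMap : (BB n R) →ₗ[symmetricSubalgebra (Fin (n+1)) R] MvPolynomial (Fin (n+1)) R :=
    { toFun := fun b => (b : MvPolynomial (Fin (n+1)) R),
      map_add' := fun _ _ => rfl,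
      map_smul' := hcomp } with hvalMap
  refine Module.Basis.mk (v := fun j : Fin (n+1) => (⟨(X 0)^(j:ℕ), pow_mem X0_mem_BB _⟩ : BB n R)) ?_ ?_
  · refine LinearIndependent.of_comp valMap ?_
    have h := xpow_linearIndependent (n := n) (R := R)
    convert h using 1
    rfl
  · rintro b -
    have hb : (b : MvPolynomial (Fin (n+1)) R) ∈ MM n R := BB_le_MM b.2
    have hmap : Submodule.map valMap (Submodule.span (symmetricSubalgebra (Fin (n+1)) R)
        (Set.range fun j : Fin (n+1) => (⟨(X 0)^(j:ℕ), pow_mem X0_mem_BB _⟩ : BB n R)))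
        = MM n R := by
      rw [Submodule.map_span, ← Set.range_comp]
      rfl
    rw [← hmap] at hb
    obtain ⟨b', hb', hbb⟩ := hb
    have : b' = b := Subtype.ext hbb
    rwa [← this]

theorem key : ∀ (n : ℕ) (R : Type u) [CommRing R] [IsDomain R],
    Nonempty (Module.Basis (Fin (Nat.factorial n)) (symmetricSubalgebra (Fin n) R)
      (MvPolynomial (Fin n) R)) := by
  intro n
  induction n with
  | zero =>
      intro R _ _
      refine ⟨Module.Basis.mk (v := fun _ : Fin (Nat.factorial 0) => (1 : MvPolynomial (Fin 0) R))
        ?_ ?_⟩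
      · rw [Fintype.linearIndependent_iff]
        intro g hg i
        have h0 : ((g ⟨0, Nat.one_pos⟩ : symmetricSubalgebra (Fin 0) R) :
            MvPolynomial (Fin 0) R) = 0 := by
          rw [Finset.sum_eq_single (⟨0, Nat.one_pos⟩ : Fin (Nat.factorial 0))
            (fun b _ hb => absurd (Fin.ext (by
              show (b : ℕ) = 0
              have := b.2; have hfac : Nat.factorial 0 = 1 := rfl; omega)) hb)
            (fun h => absurd (Finset.mem_univ _) h)] at hg
          simpa [Subalgebra.smul_def] using hg
        have hi2 := i.2
        have hiv : (i : ℕ) = 0 := by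
          have hfac : Nat.factorial 0 = 1 := rfl
          omega
        have : i = ⟨0, Nat.one_pos⟩ := Fin.ext hiv
        rw [this]
        exact Subtype.ext h0
      · rintro p -
        have hp : MvPolynomial.IsSymmetric p := by
          intro e
          have : e = Equiv.refl (Fin 0) := Equiv.ext fun i => i.elim0
          rw [this]
          simp
        have heq : (⟨p, hp⟩ : symmetricSubalgebra (Fin 0) R) • (1 : MvPolynomial (Fin 0) R)
            = p := by
          rw [Subalgebra.smul_def, smul_eq_mul, mul_one]
        rw [← heq]
        exact Submodule.smul_mem _ _ (Submodule.subset_span ⟨⟨0, Nat.one_pos⟩, rfl⟩)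
  | succ n ih =>
      intro R _ _
      obtain ⟨c⟩ := ih (Polynomial R)
      letI : Algebra (symmetricSubalgebra (Fin (n+1)) R) (BB n R) :=
        (Subalgebra.inclusion (A_le_BB (n := n) (R := R))).toAlgebra
      haveI : IsScalarTower (symmetricSubalgebra (Fin (n+1)) R) (BB n R)
          (MvPolynomial (Fin (n+1)) R) :=
        IsScalarTower.of_algebraMap_eq fun a => rfl
      have hsmul : ∀ (a : symmetricSubalgebra (Fin (n+1)) R) (b : BB n R),
          ((a • b : BB n R) : MvPolynomial (Fin (n+1)) R)
            = (a : MvPolynomial (Fin (n+1)) R) * (b : MvPolynomial (Fin (n+1)) R) := by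
        intro a b
        rw [Algebra.smul_def]
        rfl
      let b1 := basisBBoverA (n := n) (R := R) hsmul
      let b2 := basisPoverBB (n := n) (R := R) c
      let b3 := b1.smulTower b2
      exact ⟨b3.reindex (finProdFinEquiv.trans (finCongr (Nat.factorial_succ n).symm))⟩

end CoinvAux

end

open MvPolynomial

/-- The polynomial ring `ℂ[x₁,…,xₙ]` is a free module of rank `n!` over its subring of
symmetric polynomials. -/
theorem polynomials_free_of_rank_factorial_over_symmetric (n : ℕ) :
    Nonempty (Module.Basis (Fin (Nat.factorial n)) (symmetricSubalgebra (Fin n) ℂ) (MvPolynomial (Fin n) ℂ)) := by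
  exact CoinvAux.key n ℂ
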